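/- Let Cl(p,q,r) be a Clifford algebra with generators e_1,…,e_n satisfying e_a e_b + e_b e_a = 2η_{ab}, where η is diagonal. If X lies in the subalgebra generated by the null generators (those with η_{aa}=0) and X is homogeneous of even exterior degree k, then X commutes with every element of the grade-m subspace for every m; if both k and m are odd, then α(X)·V = V·X for all V in the grade-m subspace, where α is the grade involution. -/

import Mathlib

open CliffordAlgebra

noncomputable section

/-- Diagonal weights: `p` entries `+1`, `q` entries `-1`, `r` entries `0`. -/
def cliffSig (p q : ℕ) (i : ℕ) : ℝ := if i < p then 1 else if i < p + q then -1 else 0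

/-- The quadratic form of signature `(p, q, r)` on `ℝ^(p+q+r)`. -/
def Qf (p q r : ℕ) : QuadraticForm ℝ (Fin (p + q + r) → ℝ) :=
  QuadraticMap.weightedSumSquares ℝ (fun i : Fin (p + q + r) => cliffSig p q (i : ℕ))

/-- The `i`-th generator `e_i` of `Cl(p,q,r)`. -/
def gen (p q r : ℕ) (i : Fin (p + q + r)) : CliffordAlgebra (Qf p q r) :=
  ι (Qf p q r) (Pi.single i 1)

/-- The grade-`m` subspace `Cl^m(p,q,r)`: span of products of `m` distinct generators
with increasing indices. -/
def gradeSubspace (p q r m : ℕ) : Submodule ℝ (CliffordAlgebra (Qf p q r)) :=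
  Submodule.span ℝ {x | ∃ l : List (Fin (p + q + r)),
    l.Chain' (· < ·) ∧ l.length = m ∧ x = (l.map (gen p q r)).prod}

/-- `Λ_r`: the subalgebra generated by the `r` null generators. -/
def LambdaR (p q r : ℕ) : Subalgebra ℝ (CliffordAlgebra (Qf p q r)) :=
  Algebra.adjoin ℝ {x | ∃ i : Fin (p + q + r), p + q ≤ (i : ℕ) ∧ x = gen p q r i}

/-- `Λ^d_r`: the degree-`d` component of `Λ_r`. -/
def LambdaDeg (p q r d : ℕ) : Submodule ℝ (CliffordAlgebra (Qf p q r)) :=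
  Submodule.span ℝ {x | ∃ l : List (Fin (p + q + r)),
    l.Chain' (· < ·) ∧ l.length = d ∧ (∀ i ∈ l, p + q ≤ (i : ℕ)) ∧
    x = (l.map (gen p q r)).prod}

/-- The pseudoscalar `e_1 ⋯ e_n`. -/
def pseudoscalar (p q r : ℕ) : CliffordAlgebra (Qf p q r) :=
  ((List.finRange (p + q + r)).map (gen p q r)).prod

lemma polar_null (p q r : ℕ) (i j : Fin (p+q+r)) (hi : p + q ≤ (i:ℕ)) :
    QuadraticMap.polar (Qf p q r) (Pi.single i 1) (Pi.single j 1) = 0 := by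
  rcases eq_or_ne j i with rfl | hne
  · rw [QuadraticMap.polar_self]
    have : Qf p q r (Pi.single j 1) = 0 := by
      simp only [Qf, QuadraticMap.weightedSumSquares_apply, smul_eq_mul, Pi.single_apply]
      rw [Finset.sum_eq_single j]
      · simp [cliffSig, Nat.not_lt.mpr hi, Nat.not_lt.mpr (le_trans (Nat.le_add_right p q) hi)]
      · intro b _ hb; simp [hb]
      · simp
    simp [this]
  · simp only [QuadraticMap.polar, Qf, QuadraticMap.weightedSumSquares_apply, smul_eq_mul,
      Pi.add_apply, Pi.single_apply]
    rw [← Finset.sum_sub_distrib, ← Finset.sum_sub_distrib]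
    apply Finset.sum_eq_zero
    intro a _
    rcases eq_or_ne a i with rfl | hai
    · simp [Ne.symm hne]
    · rcases eq_or_ne a j with rfl | haj
      · simp [hai]
      · simp [hai, haj]

lemma anticomm (p q r : ℕ) (i j : Fin (p+q+r)) (hi : p + q ≤ (i:ℕ)) :
    gen p q r i * gen p q r j = - (gen p q r j * gen p q r i) := by
  have h := ι_mul_ι_add_swap (Q := Qf p q r) (Pi.single i 1) (Pi.single j 1)
  rw [polar_null p q r i j hi, map_zero] at h
  rw [eq_neg_iff_add_eq_zero]
  exact h

lemma gen_comm_prod (p q r : ℕ) (i : Fin (p+q+r)) (hi : p + q ≤ (i:ℕ))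
    (l : List (Fin (p+q+r))) :
    gen p q r i * (l.map (gen p q r)).prod
      = (-1:ℝ)^l.length • ((l.map (gen p q r)).prod * gen p q r i) := by
  induction l with
  | nil => simp
  | cons a t ih =>
    simp only [List.map_cons, List.prod_cons, List.length_cons]
    rw [← mul_assoc, anticomm p q r i a hi, neg_mul, mul_assoc, ih]
    rw [mul_smul_comm, pow_succ]
    simp [mul_assoc, smul_smul]

lemma prod_comm_prod (p q r : ℕ) (l l' : List (Fin (p+q+r)))
    (hl : ∀ i ∈ l, p + q ≤ (i:ℕ)) :
    (l.map (gen p q r)).prod * (l'.map (gen p q r)).prod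
      = (-1:ℝ)^(l.length * l'.length) •
        ((l'.map (gen p q r)).prod * (l.map (gen p q r)).prod) := by
  induction l with
  | nil => simp
  | cons a t ih =>
    simp only [List.map_cons, List.prod_cons, List.length_cons]
    rw [mul_assoc, ih (fun i hi => hl i (List.mem_cons_of_mem a hi)),
      mul_smul_comm, ← mul_assoc, gen_comm_prod p q r a (hl a List.mem_cons_self) l',
      smul_mul_assoc, smul_smul, ← pow_add, mul_assoc]
    congr 2
    ring_nf

lemma involute_prod (p q r : ℕ) (l : List (Fin (p+q+r))) :
    involute ((l.map (gen p q r)).prod) = (-1:ℝ)^l.length • (l.map (gen p q r)).prod := by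
  induction l with
  | nil => simp
  | cons a t ih =>
    simp only [List.map_cons, List.prod_cons, List.length_cons, map_mul]
    rw [ih, gen, involute_ι, pow_succ, neg_mul, mul_smul_comm]
    simp [smul_smul, mul_comm]

lemma span_comm (p q r k m : ℕ) (X : CliffordAlgebra (Qf p q r))
    (hX : X ∈ LambdaDeg p q r k) (V : CliffordAlgebra (Qf p q r))
    (hV : V ∈ gradeSubspace p q r m) :
    X * V = (-1:ℝ)^(k*m) • (V * X) := by
  induction hX using Submodule.span_induction with
  | mem x hx =>
    obtain ⟨l, -, hlen, hnull, rfl⟩ := hx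
    induction hV using Submodule.span_induction with
    | mem v hv =>
      obtain ⟨l', -, hlen', rfl⟩ := hv
      rw [prod_comm_prod p q r l l' hnull, hlen, hlen']
    | zero => simp
    | add a b _ _ iha ihb => rw [mul_add, iha, ihb, add_mul, smul_add]
    | smul c a _ iha => rw [mul_smul_comm, iha, smul_mul_assoc, smul_comm]
  | zero => simp
  | add a b _ _ iha ihb => rw [add_mul, iha, ihb, mul_add, smul_add]
  | smul c a _ iha => rw [smul_mul_assoc, iha, mul_smul_comm, smul_comm]

lemma involute_lambda (p q r k : ℕ) (X : CliffordAlgebra (Qf p q r))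
    (hX : X ∈ LambdaDeg p q r k) : involute X = (-1:ℝ)^k • X := by
  induction hX using Submodule.span_induction with
  | mem x hx =>
    obtain ⟨l, -, hlen, -, rfl⟩ := hx
    rw [involute_prod, hlen]
  | zero => simp
  | add a b _ _ iha ihb => rw [map_add, iha, ihb, smul_add]
  | smul c a _ iha => rw [map_smul, iha, smul_comm]

/-- An element of `Λ^k_r` with `k` even commutes with every grade-`m` subspace; if both
`k` and `m` are odd it lies in the twisted centralizer of the grade-`m` subspace. -/
theorem stmt1 (p q r k m : ℕ) (X : CliffordAlgebra (Qf p q r))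
    (hX : X ∈ LambdaDeg p q r k) :
    (Even k → ∀ V ∈ gradeSubspace p q r m, X * V = V * X) ∧
    (Odd k → Odd m → ∀ V ∈ gradeSubspace p q r m, involute X * V = V * X) := by
  constructor
  · intro hk V hV
    rw [span_comm p q r k m X hX V hV, Even.neg_one_pow (hk.mul_right m), one_smul]
  · intro hk hm V hV
    rw [involute_lambda p q r k X hX, Odd.neg_one_pow hk, neg_one_smul, neg_mul,
      span_comm p q r k m X hX V hV, Odd.neg_one_pow (hk.mul hm), neg_one_smul, neg_neg]
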